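/- Suppose that for all g ∈ {2, …, 𝒯}, all t with g ≤ t ≤ 𝒯, and all d ∈ 𝒟₊: E[Y_t(g, d) − Y_{t−1}(0) | G = g, D = d] = E[Y_t(g, d) − Y_{t−1}(0) | G = g] and E[Y_t(0) − Y_{t−1}(0) | G = g, D = d] = E[Y_t(0) − Y_{t−1}(0) | D = 0]. Then for every g ∈ {2, …, 𝒯}, every t with g ≤ t ≤ 𝒯, and every d ∈ 𝒟₊: ATE(g, t, d) = E[Y_t − Y_{g−1} | G = g, D = d] − E[Y_t − Y_{g−1} | D = 0]. -/

import Mathlib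

open MeasureTheory

/-- Conditional expectation of `X` given the event `A`: `E[X | A] = E[X·1_A] / P(A)`. -/
noncomputable def cExp {Ω : Type*} [MeasurableSpace Ω] (P : Measure Ω)
    (X : Ω → ℝ) (A : Set Ω) : ℝ :=
  (∫ ω in A, X ω ∂P) / (P A).toReal

section Aux
variable {Ω : Type*} [MeasurableSpace Ω] {P : Measure Ω}

lemma cExp_sub' {X Z : Ω → ℝ} (A : Set Ω) (hX : Integrable X P) (hZ : Integrable Z P) :
    cExp P (fun ω => X ω - Z ω) A = cExp P X A - cExp P Z A := by
  unfold cExp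
  rw [integral_sub hX.integrableOn hZ.integrableOn, sub_div]

lemma cExp_add' {X Z : Ω → ℝ} (A : Set Ω) (hX : Integrable X P) (hZ : Integrable Z P) :
    cExp P (fun ω => X ω + Z ω) A = cExp P X A + cExp P Z A := by
  unfold cExp
  rw [integral_add hX.integrableOn hZ.integrableOn, add_div]

lemma cExp_congr' {X Z : Ω → ℝ} {A : Set Ω} (hA : MeasurableSet A) (h : Set.EqOn X Z A) :
    cExp P X A = cExp P Z A := by
  unfold cExp
  rw [setIntegral_congr_fun hA h]

lemma cExp_sum' {ι : Type*} (s : Finset ι) (f : ι → Ω → ℝ) (A : Set Ω)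
    (hf : ∀ i ∈ s, Integrable (f i) P) :
    cExp P (fun ω => ∑ i ∈ s, f i ω) A = ∑ i ∈ s, cExp P (f i) A := by
  unfold cExp
  rw [integral_finset_sum s (fun i hi => (hf i hi).integrableOn), Finset.sum_div]

lemma tele_sum (f : ℕ → ℝ) {m n : ℕ} (h : m ≤ n) :
    ∑ i ∈ Finset.Ico m n, (f (i+1) - f i) = f n - f m := by
  rw [Finset.sum_Ico_eq_sub _ h, Finset.sum_range_sub, Finset.sum_range_sub]
  ring
end Aux

/-- Under strong parallel trends with respect to the never-treated
group in post-treatment periods, for every group `g ∈ {2,…,T}`, period `t` with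
`g ≤ t ≤ T`, and dose `d ∈ 𝒟₊`, the group-time ATE is identified by comparison with
the never-treated group:
`ATE(g,t,d) = E[Y_t − Y_{g−1} | G = g, D = d] − E[Y_t − Y_{g−1} | D = 0]`. -/
theorem ate_gtd_identified_never_treated
    {Ω : Type*} [MeasurableSpace Ω] (P : Measure Ω) [IsProbabilityMeasure P]
    (T : ℕ) (hT : 2 ≤ T)
    (Dpos : Finset ℝ) (hDposNe : Dpos.Nonempty) (hDposPos : ∀ d ∈ Dpos, (0 : ℝ) < d)
    (D : Ω → ℝ) (hD : Measurable D)
    (G : Ω → ℕ) (hG : Measurable G)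
    (hGrange : ∀ ω, 2 ≤ G ω ∧ G ω ≤ T + 1)
    (hDval : ∀ ω, D ω = 0 ∨ D ω ∈ Dpos)
    (hD0G : ∀ ω, D ω = 0 ↔ G ω = T + 1)
    (hpNever : 0 < P {ω | G ω = T + 1})
    (hpgd : ∀ g : ℕ, 2 ≤ g → g ≤ T → ∀ d ∈ Dpos, 0 < P {ω | G ω = g ∧ D ω = d})
    (Y0 : ℕ → Ω → ℝ) (hY0m : ∀ t, Measurable (Y0 t)) (hY0i : ∀ t, Integrable (Y0 t) P)
    (Ypo : ℕ → ℕ → ℝ → Ω → ℝ)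
    (hYpom : ∀ t g dd, Measurable (Ypo t g dd)) (hYpoi : ∀ t g dd, Integrable (Ypo t g dd) P)
    (hNoAnt : ∀ t g : ℕ, ∀ dd ∈ Dpos, 2 ≤ g → g ≤ T → t < g → Ypo t g dd = Y0 t)
    (Y : ℕ → Ω → ℝ)
    (hYobs : ∀ t ω, Y t ω = if t < G ω then Y0 t ω else Ypo t (G ω) (D ω) ω)
    (hSPT : ∀ g : ℕ, 2 ≤ g → g ≤ T → ∀ t : ℕ, g ≤ t → t ≤ T → ∀ dd ∈ Dpos,
      cExp P (fun ω => Ypo t g dd ω - Y0 (t - 1) ω) {ω | G ω = g ∧ D ω = dd} =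
        cExp P (fun ω => Ypo t g dd ω - Y0 (t - 1) ω) {ω | G ω = g} ∧
      cExp P (fun ω => Y0 t ω - Y0 (t - 1) ω) {ω | G ω = g ∧ D ω = dd} =
        cExp P (fun ω => Y0 t ω - Y0 (t - 1) ω) {ω | D ω = 0}) :
    ∀ g : ℕ, 2 ≤ g → g ≤ T → ∀ t : ℕ, g ≤ t → t ≤ T → ∀ dd ∈ Dpos,
      cExp P (fun ω => Ypo t g dd ω - Y0 t ω) {ω | G ω = g} =
        cExp P (fun ω => Y t ω - Y (g - 1) ω) {ω | G ω = g ∧ D ω = dd} -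
          cExp P (fun ω => Y t ω - Y (g - 1) ω) {ω | D ω = 0} := by
  intro g hg2 hgT t hgt htT dd hdd
  have hg1 : 1 ≤ g := le_trans (by norm_num) hg2
  have ht1 : 1 ≤ t := le_trans hg1 hgt
  have hg1t1 : g - 1 ≤ t - 1 := Nat.sub_le_sub_right hgt 1
  -- measurable sets
  have hAset : ∀ d' : ℝ, MeasurableSet {ω | G ω = g ∧ D ω = d'} := fun d' =>
    (hG (measurableSet_singleton g)).inter (hD (measurableSet_singleton d'))
  have hBset : MeasurableSet {ω | D ω = 0} := hD (measurableSet_singleton 0)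
  have hCset : MeasurableSet {ω | G ω = g} := hG (measurableSet_singleton g)
  -- the incremental functions
  have hFi : ∀ i : ℕ, Integrable (fun ω => Y0 (i+1) ω - Y0 i ω) P :=
    fun i => (hY0i (i+1)).sub (hY0i i)
  -- observed outcomes on A
  have hYA : Set.EqOn (fun ω => Y t ω - Y (g-1) ω)
      (fun ω => Ypo t g dd ω - Y0 (g-1) ω) {ω | G ω = g ∧ D ω = dd} := by
    intro ω hω
    obtain ⟨hωG, hωD⟩ := hω
    simp only [hYobs t ω, hYobs (g-1) ω, hωG, hωD]
    rw [if_neg (by omega), if_pos (by omega)]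
  -- observed outcomes on B
  have hYB : Set.EqOn (fun ω => Y t ω - Y (g-1) ω)
      (fun ω => Y0 t ω - Y0 (g-1) ω) {ω | D ω = 0} := by
    intro ω hω
    have hωG : G ω = T + 1 := (hD0G ω).mp hω
    simp only [hYobs t ω, hYobs (g-1) ω, hωG]
    rw [if_pos (by omega), if_pos (by omega)]
  -- SPT at time i+1 for i ∈ Ico (g-1) (t-1), second part, any dose
  have hSPT2 : ∀ d' ∈ Dpos, ∀ i ∈ Finset.Ico (g-1) (t-1),
      cExp P (fun ω => Y0 (i+1) ω - Y0 i ω) {ω | G ω = g ∧ D ω = d'} =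
        cExp P (fun ω => Y0 (i+1) ω - Y0 i ω) {ω | D ω = 0} := by
    intro d' hd' i hi
    rw [Finset.mem_Ico] at hi
    have h1 : g ≤ i + 1 := by omega
    have h2 : i + 1 ≤ T := by omega
    have := (hSPT g hg2 hgT (i+1) h1 h2 d' hd').2
    simpa [Nat.add_sub_cancel] using this
  -- SPT at time t, second part, for all doses
  have hSPT2t : ∀ d' ∈ Dpos,
      cExp P (fun ω => Y0 t ω - Y0 (t-1) ω) {ω | G ω = g ∧ D ω = d'} =
        cExp P (fun ω => Y0 t ω - Y0 (t-1) ω) {ω | D ω = 0} := fun d' hd' =>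
    (hSPT g hg2 hgT t hgt htT d' hd').2
  -- decomposition over A
  have eA : cExp P (fun ω => Y t ω - Y (g-1) ω) {ω | G ω = g ∧ D ω = dd} =
      cExp P (fun ω => Ypo t g dd ω - Y0 (t-1) ω) {ω | G ω = g} +
        ∑ i ∈ Finset.Ico (g-1) (t-1),
          cExp P (fun ω => Y0 (i+1) ω - Y0 i ω) {ω | D ω = 0} := by
    calc cExp P (fun ω => Y t ω - Y (g-1) ω) {ω | G ω = g ∧ D ω = dd}
        = cExp P (fun ω => (Ypo t g dd ω - Y0 (t-1) ω) +
            ∑ i ∈ Finset.Ico (g-1) (t-1), (Y0 (i+1) ω - Y0 i ω))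
            {ω | G ω = g ∧ D ω = dd} := by
          refine cExp_congr' (hAset dd) ?_
          intro ω hω
          have h := hYA hω
          simp only at h ⊢
          rw [h, tele_sum (fun i => Y0 i ω) hg1t1]
          ring
      _ = cExp P (fun ω => Ypo t g dd ω - Y0 (t-1) ω) {ω | G ω = g ∧ D ω = dd} +
            cExp P (fun ω => ∑ i ∈ Finset.Ico (g-1) (t-1), (Y0 (i+1) ω - Y0 i ω))
              {ω | G ω = g ∧ D ω = dd} :=
          cExp_add' _ ((hYpoi t g dd).sub (hY0i (t-1)))
            (integrable_finset_sum _ (fun i _ => hFi i))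
      _ = cExp P (fun ω => Ypo t g dd ω - Y0 (t-1) ω) {ω | G ω = g} +
            ∑ i ∈ Finset.Ico (g-1) (t-1),
              cExp P (fun ω => Y0 (i+1) ω - Y0 i ω) {ω | G ω = g ∧ D ω = dd} := by
          rw [(hSPT g hg2 hgT t hgt htT dd hdd).1,
            cExp_sum' _ _ _ (fun i _ => hFi i)]
      _ = _ := by
          congr 1
          exact Finset.sum_congr rfl (fun i hi => hSPT2 dd hdd i hi)
  -- decomposition over B
  have eB : cExp P (fun ω => Y t ω - Y (g-1) ω) {ω | D ω = 0} =
      (∑ i ∈ Finset.Ico (g-1) (t-1),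
          cExp P (fun ω => Y0 (i+1) ω - Y0 i ω) {ω | D ω = 0}) +
        cExp P (fun ω => Y0 t ω - Y0 (t-1) ω) {ω | D ω = 0} := by
    calc cExp P (fun ω => Y t ω - Y (g-1) ω) {ω | D ω = 0}
        = cExp P (fun ω => ∑ i ∈ Finset.Ico (g-1) t, (Y0 (i+1) ω - Y0 i ω))
            {ω | D ω = 0} := by
          refine cExp_congr' hBset ?_
          intro ω hω
          have h := hYB hω
          simp only at h ⊢
          rw [h, tele_sum (fun i => Y0 i ω) (by omega : g - 1 ≤ t)]
      _ = ∑ i ∈ Finset.Ico (g-1) t,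
            cExp P (fun ω => Y0 (i+1) ω - Y0 i ω) {ω | D ω = 0} :=
          cExp_sum' _ _ _ (fun i _ => hFi i)
      _ = _ := by
          have hsplit : Finset.Ico (g-1) t = Finset.Ico (g-1) ((t-1)+1) := by
            rw [Nat.sub_add_cancel ht1]
          rw [hsplit, Finset.sum_Ico_succ_top hg1t1]
          congr 1
          rw [Nat.sub_add_cancel ht1]
  -- partition argument: cExp over {G = g} equals over {D = 0}
  have ePart : cExp P (fun ω => Y0 t ω - Y0 (t-1) ω) {ω | G ω = g} =
      cExp P (fun ω => Y0 t ω - Y0 (t-1) ω) {ω | D ω = 0} := by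
    set X : Ω → ℝ := fun ω => Y0 t ω - Y0 (t-1) ω with hX
    set c : ℝ := cExp P X {ω | D ω = 0} with hc
    have hXint : Integrable X P := (hY0i t).sub (hY0i (t-1))
    set Ad : ℝ → Set Ω := fun d' => {ω | G ω = g ∧ D ω = d'} with hAd
    have hCun : {ω | G ω = g} = ⋃ d' ∈ Dpos, Ad d' := by
      ext ω
      simp only [Set.mem_setOf_eq, Set.mem_iUnion, hAd]
      constructor
      · intro hωG
        have hDne : D ω ≠ 0 := by
          intro h0
          have := (hD0G ω).mp h0
          omega
        rcases hDval ω with h | h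
        · exact absurd h hDne
        · exact ⟨D ω, h, hωG, rfl⟩
      · rintro ⟨d', _, hωG, _⟩
        exact hωG
    have hdisj : (↑Dpos : Set ℝ).Pairwise (Function.onFun Disjoint Ad) := by
      intro d1 _ d2 _ hne
      simp only [Function.onFun, hAd]
      rw [Set.disjoint_left]
      rintro ω ⟨_, h1⟩ ⟨_, h2⟩
      exact hne (h1 ▸ h2 ▸ rfl)
    have hInt : ∀ d' ∈ Dpos, ∫ ω in Ad d', X ω ∂P = c * (P (Ad d')).toReal := by
      intro d' hd'
      have hp : P (Ad d') ≠ 0 := (hpgd g hg2 hgT d' hd').ne'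
      have hpr : (P (Ad d')).toReal ≠ 0 := by
        simp [ENNReal.toReal_eq_zero_iff, hp, measure_ne_top P _]
      have h := hSPT2t d' hd'
      unfold cExp at h
      rw [div_eq_iff hpr] at h
      exact h
    have hIntC : ∫ ω in {ω | G ω = g}, X ω ∂P = c * (P {ω | G ω = g}).toReal := by
      rw [hCun, integral_biUnion_finset Dpos (fun d' _ => hAset d') hdisj
        (fun d' _ => hXint.integrableOn)]
      rw [Finset.sum_congr rfl hInt, ← Finset.mul_sum]
      congr 1
      rw [measure_biUnion_finset hdisj (fun d' _ => hAset d')]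
      rw [ENNReal.toReal_sum (fun d' _ => measure_ne_top P _)]
    have hpC : (P {ω | G ω = g}).toReal ≠ 0 := by
      have hle : P {ω | G ω = g ∧ D ω = dd} ≤ P {ω | G ω = g} :=
        measure_mono (fun ω hω => hω.1)
      have hne : P {ω | G ω = g} ≠ 0 := fun h0 =>
        absurd (le_antisymm (h0 ▸ hle) (zero_le)) (hpgd g hg2 hgT dd hdd).ne'
      simp [ENNReal.toReal_eq_zero_iff, hne, measure_ne_top P _]
    show cExp P X {ω | G ω = g} = c
    unfold cExp
    rw [hIntC, mul_div_assoc, div_self hpC, mul_one]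
  -- finish
  rw [eA, eB, ← ePart]
  have hfin : (fun ω => Ypo t g dd ω - Y0 t ω) =
      fun ω => (Ypo t g dd ω - Y0 (t-1) ω) - (Y0 t ω - Y0 (t-1) ω) := by
    funext ω; ring
  rw [hfin,
    show cExp P (fun ω => (Ypo t g dd ω - Y0 (t-1) ω) - (Y0 t ω - Y0 (t-1) ω))
        {ω | G ω = g} =
      cExp P (fun ω => Ypo t g dd ω - Y0 (t-1) ω) {ω | G ω = g} -
        cExp P (fun ω => Y0 t ω - Y0 (t-1) ω) {ω | G ω = g} from
      cExp_sub' _ ((hYpoi t g dd).sub (hY0i (t-1))) ((hY0i t).sub (hY0i (t-1)))]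
  ring
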